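/- The limit lim_{t → 0⁺} t² · Σ_{a=1}^∞ a·sech(a·t) exists and equals 2·Σ_{k=0}^∞ (-1)^k/(2k+1)² (twice Catalan's constant), where sech(u) = 1/cosh(u) and the series converges for every t > 0. -/

import Mathlib

open Filter

open Real in
private lemma st18_aux_row {z : ℝ} (h0 : 0 < z) (h1 : z < 1) :
    HasSum (fun a : ℕ => ((a : ℝ) + 1) * z ^ (a + 1)) (z / (1 - z) ^ 2) := by
  have hz : ‖z‖ < 1 := by rwa [Real.norm_eq_abs, abs_of_pos h0]
  have h := hasSum_coe_mul_geometric_of_norm_lt_one hz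
  have h2 := (hasSum_nat_add_iff' (f := fun n : ℕ => (n : ℝ) * z ^ n) 1).mpr h
  simp only [Finset.range_one, Finset.sum_singleton, Nat.cast_zero, zero_mul, sub_zero] at h2
  convert h2 using 2 with a
  · rfl
  · push_cast
    ring

private lemma st18_aux_one_sub_exp {s : ℝ} (hs : 0 ≤ s) :
    s * Real.exp (-s / 2) ≤ 1 - Real.exp (-s) := by
  have key : 1 - Real.exp (-s) = Real.exp (-s / 2) * (2 * Real.sinh (s / 2)) := by
    rw [Real.sinh_eq]
    have e1 : Real.exp (-s / 2) * Real.exp (s / 2) = 1 := by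
      rw [← Real.exp_add]; ring_nf; exact Real.exp_zero
    have e2 : Real.exp (-s / 2) * Real.exp (-(s / 2)) = Real.exp (-s) := by
      rw [← Real.exp_add]; ring_nf
    nlinarith [e1, e2]
  rw [key]
  have hsinh : s / 2 ≤ Real.sinh (s / 2) := by
    rcases eq_or_lt_of_le hs with h | h
    · simp [← h]
    · exact (Real.self_lt_sinh_iff.mpr (by linarith)).le
  have := Real.exp_pos (-s / 2)
  nlinarith

private noncomputable def st18F (t : ℝ) (a k : ℕ) : ℝ :=
  2 * (-1 : ℝ) ^ k * ((a : ℝ) + 1) * Real.exp (-((2 * (k : ℝ) + 1) * (((a : ℝ) + 1) * t)))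

private lemma st18_zpow_exp {c : ℝ} (n : ℕ) : Real.exp c ^ n = Real.exp ((n : ℝ) * c) := by
  rw [← Real.exp_nat_mul]

private lemma st18_aux_col {t : ℝ} (ht : 0 < t) (a : ℕ) :
    HasSum (fun k => st18F t a k) (((a : ℝ) + 1) / Real.cosh (((a : ℝ) + 1) * t)) := by
  set u : ℝ := ((a : ℝ) + 1) * t with hu_def
  have hu : 0 < u := by positivity
  set w : ℝ := Real.exp (-u) with hw_def
  have hw0 : 0 < w := Real.exp_pos _
  have hw1 : w < 1 := Real.exp_lt_one_iff.mpr (by linarith)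
  have hr : ‖-w ^ 2‖ < 1 := by
    rw [norm_neg, Real.norm_eq_abs, abs_of_pos (by positivity)]
    nlinarith
  have hg := (hasSum_geometric_of_norm_lt_one hr).mul_left (2 * ((a : ℝ) + 1) * w)
  have heq : ∀ k : ℕ, 2 * ((a : ℝ) + 1) * w * (-w ^ 2) ^ k = st18F t a k := by
    intro k
    have h1 : (-w ^ 2) ^ k = (-1 : ℝ) ^ k * w ^ (2 * k) := by
      rw [neg_pow, pow_mul]
    rw [h1, st18F]
    have hw2 : w ^ (2 * k) = Real.exp (-((2 * (k : ℝ)) * u)) := by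
      rw [hw_def, ← Real.exp_nat_mul]
      congr 1
      push_cast
      ring
    have h3 : Real.exp (-((2 * (k : ℝ) + 1) * (((a : ℝ) + 1) * t))) =
        Real.exp (-u) * Real.exp (-(2 * (k : ℝ) * u)) := by
      rw [← Real.exp_add]
      congr 1
      rw [hu_def]
      ring
    rw [hw2, h3, hw_def]
    ring
  have hcosh : Real.cosh u = (1 + w ^ 2) / (2 * w) := by
    rw [Real.cosh_eq]
    have hxw : Real.exp u = w⁻¹ := by
      rw [hw_def, ← Real.exp_neg, neg_neg]
    rw [hxw, hw_def]
    field_simp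
  have hval : 2 * ((a : ℝ) + 1) * w * (1 - -w ^ 2)⁻¹ =
      ((a : ℝ) + 1) / Real.cosh u := by
    rw [hcosh]
    have h1 : (0:ℝ) < 1 + w ^ 2 := by positivity
    field_simp
    rw [sub_neg_eq_add, div_self (ne_of_gt h1)]
  simp only [← heq]
  rw [← hval]
  exact hg

private lemma st18_aux_rowF {t : ℝ} (ht : 0 < t) (k : ℕ) :
    HasSum (fun a => st18F t a k)
      (2 * (-1 : ℝ) ^ k * (Real.exp (-((2 * (k : ℝ) + 1) * t)) /
        (1 - Real.exp (-((2 * (k : ℝ) + 1) * t))) ^ 2)) := by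
  set z : ℝ := Real.exp (-((2 * (k : ℝ) + 1) * t)) with hz_def
  have hz0 : 0 < z := Real.exp_pos _
  have hz1 : z < 1 := Real.exp_lt_one_iff.mpr (by nlinarith [Nat.cast_nonneg (α := ℝ) k])
  have h := (st18_aux_row hz0 hz1).mul_left (2 * (-1 : ℝ) ^ k)
  refine h.congr_fun fun a => ?_
  rw [st18F, hz_def, st18_zpow_exp]
  rw [show (((a + 1 : ℕ) : ℝ)) * -((2 * (k : ℝ) + 1) * t) =
    -((2 * (k : ℝ) + 1) * (((a : ℝ) + 1) * t)) by push_cast; ring]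
  ring

private lemma st18_aux_sumF {t : ℝ} (ht : 0 < t) : Summable (Function.uncurry (st18F t)) := by
  have hy1 : Real.exp (-t) < 1 := Real.exp_lt_one_iff.mpr (by linarith)
  have hy0 : 0 < Real.exp (-t) := Real.exp_pos _
  have hf : Summable (fun a : ℕ => 2 * (((a : ℝ) + 1) * Real.exp (-t) ^ (a + 1))) :=
    ((st18_aux_row hy0 hy1).summable).mul_left 2
  have hg : Summable (fun k : ℕ => (Real.exp (-t) ^ 2) ^ k) :=
    summable_geometric_of_lt_one (by positivity) (by nlinarith)
  have hprod := hf.mul_of_nonneg hg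
    (fun a => by positivity) (fun k => by positivity)
  refine Summable.of_norm_bounded hprod fun p => ?_
  obtain ⟨a, k⟩ := p
  simp only [Function.uncurry, st18F, Real.norm_eq_abs]
  rw [abs_mul, abs_mul, abs_mul]
  have h1 : |(2 : ℝ)| = 2 := by norm_num
  have h2 : |(-1 : ℝ) ^ k| = 1 := by simp
  have h3 : |((a : ℝ) + 1)| = (a : ℝ) + 1 := abs_of_pos (by positivity)
  rw [h1, h2, h3, abs_of_pos (Real.exp_pos _)]
  have hle : Real.exp (-((2 * (k : ℝ) + 1) * (((a : ℝ) + 1) * t))) ≤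
      Real.exp (-t) ^ (a + 1) * (Real.exp (-t) ^ 2) ^ k := by
    rw [st18_zpow_exp, ← pow_mul, st18_zpow_exp, ← Real.exp_add]
    apply Real.exp_le_exp.mpr
    push_cast
    nlinarith [mul_nonneg (mul_nonneg (Nat.cast_nonneg (α := ℝ) k) (Nat.cast_nonneg (α := ℝ) a)) ht.le,
      mul_nonneg (Nat.cast_nonneg (α := ℝ) k) ht.le]
  calc 2 * 1 * ((a : ℝ) + 1) * Real.exp (-((2 * (k : ℝ) + 1) * (((a : ℝ) + 1) * t)))
      ≤ 2 * 1 * ((a : ℝ) + 1) * (Real.exp (-t) ^ (a + 1) * (Real.exp (-t) ^ 2) ^ k) := by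
        apply mul_le_mul_of_nonneg_left hle (by positivity)
    _ = 2 * (((a : ℝ) + 1) * Real.exp (-t) ^ (a + 1)) * (Real.exp (-t) ^ 2) ^ k := by ring

private lemma st18_key {t : ℝ} (ht : 0 < t) :
    ∑' a : ℕ, ((a : ℝ) + 1) / Real.cosh (((a : ℝ) + 1) * t) =
      ∑' k : ℕ, 2 * (-1 : ℝ) ^ k * (Real.exp (-((2 * (k : ℝ) + 1) * t)) /
        (1 - Real.exp (-((2 * (k : ℝ) + 1) * t))) ^ 2) := by
  calc ∑' a : ℕ, ((a : ℝ) + 1) / Real.cosh (((a : ℝ) + 1) * t)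
      = ∑' (a : ℕ) (k : ℕ), st18F t a k :=
        tsum_congr fun a => ((st18_aux_col ht a).tsum_eq).symm
    _ = ∑' (k : ℕ) (a : ℕ), st18F t a k := (Summable.tsum_comm (st18_aux_sumF ht)).symm
    _ = _ := tsum_congr fun k => (st18_aux_rowF ht k).tsum_eq

private lemma st18_summable {t : ℝ} (ht : 0 < t) :
    Summable fun a : ℕ => ((a : ℝ) + 1) / Real.cosh (((a : ℝ) + 1) * t) := by
  have hy1 : Real.exp (-t) < 1 := Real.exp_lt_one_iff.mpr (by linarith)
  have hy0 : 0 < Real.exp (-t) := Real.exp_pos _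
  have hf : Summable (fun a : ℕ => 2 * (((a : ℝ) + 1) * Real.exp (-t) ^ (a + 1))) :=
    ((st18_aux_row hy0 hy1).summable).mul_left 2
  refine Summable.of_nonneg_of_le (fun a => by positivity) (fun a => ?_) hf
  set u : ℝ := ((a : ℝ) + 1) * t with hu_def
  have hu : 0 < u := by positivity
  have hcosh : 0 < Real.cosh u := Real.cosh_pos u
  rw [div_le_iff₀ hcosh]
  have hwu : Real.exp (-t) ^ (a + 1) = Real.exp (-u) := by
    rw [st18_zpow_exp]
    congr 1
    rw [hu_def]
    push_cast
    ring
  rw [hwu, Real.cosh_eq]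
  have he : Real.exp (-u) * Real.exp u = 1 := by
    rw [← Real.exp_add]; simp
  nlinarith [Real.exp_pos (-u), Real.exp_pos u, sq_nonneg (Real.exp (-u)),
    Nat.cast_nonneg (α := ℝ) a]

private lemma st18_limit :
    Tendsto (fun t : ℝ => ∑' k : ℕ, t ^ 2 * (2 * (-1 : ℝ) ^ k *
        (Real.exp (-((2 * (k : ℝ) + 1) * t)) /
          (1 - Real.exp (-((2 * (k : ℝ) + 1) * t))) ^ 2)))
      (nhdsWithin 0 (Set.Ioi 0))
      (nhds (∑' k : ℕ, 2 * (-1 : ℝ) ^ k / (2 * (k : ℝ) + 1) ^ 2)) := by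
  have hbound_sum : Summable fun k : ℕ => 2 / (2 * (k : ℝ) + 1) ^ 2 := by
    have h1 : Summable fun k : ℕ => (1 : ℝ) / ((k : ℝ) + 1) ^ 2 := by
      have := (summable_nat_add_iff (f := fun n : ℕ => (1 : ℝ) / (n : ℝ) ^ 2) 1).mpr
        ((Real.summable_one_div_nat_pow).mpr one_lt_two)
      simpa using this
    refine Summable.of_nonneg_of_le (fun k => by positivity) (fun k => ?_) (h1.mul_left 2)
    have hk : ((k : ℝ) + 1) ^ 2 ≤ (2 * (k : ℝ) + 1) ^ 2 := by
      nlinarith [Nat.cast_nonneg (α := ℝ) k]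
    have h2 : (0:ℝ) < ((k : ℝ) + 1) ^ 2 := by positivity
    have h3 : (0:ℝ) < (2 * (k : ℝ) + 1) ^ 2 := by positivity
    rw [div_le_iff₀ h3]
    rw [show 2 * ((1:ℝ) / ((k : ℝ) + 1) ^ 2) * (2 * (k : ℝ) + 1) ^ 2 =
      2 * ((2 * (k : ℝ) + 1) ^ 2 / ((k : ℝ) + 1) ^ 2) by ring]
    have h4 : (1:ℝ) ≤ (2 * (k : ℝ) + 1) ^ 2 / ((k : ℝ) + 1) ^ 2 := (one_le_div h2).mpr hk
    linarith
  refine tendsto_tsum_of_dominated_convergence hbound_sum ?_ ?_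
  · intro k
    set c : ℝ := 2 * (k : ℝ) + 1 with hc_def
    have hc : 0 < c := by positivity
    have hφ : HasDerivAt (fun x : ℝ => 1 - Real.exp (-(c * x))) c 0 := by
      have h0 : HasDerivAt (fun x : ℝ => -(c * x)) (-c) 0 := by
        have h := ((hasDerivAt_id (0:ℝ)).const_mul c).neg; rw [mul_one] at h; exact h
      have h1 := h0.exp
      simpa using h1.const_sub 1
    have hslope : Tendsto (fun x : ℝ => (1 - Real.exp (-(c * x))) / x)
        (nhdsWithin 0 (Set.Ioi 0)) (nhds c) := by
      have h := hasDerivAt_iff_tendsto_slope.mp hφ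
      have h2 := h.mono_left (nhdsWithin_mono 0 (fun x hx => ne_of_gt hx))
      refine h2.congr fun x => ?_
      simp [slope_def_field]
    have hinv : Tendsto (fun x : ℝ => x / (1 - Real.exp (-(c * x))))
        (nhdsWithin 0 (Set.Ioi 0)) (nhds c⁻¹) := by
      have := hslope.inv₀ (ne_of_gt hc)
      exact this.congr fun x => inv_div _ _
    have hz1 : Tendsto (fun x : ℝ => Real.exp (-(c * x)))
        (nhdsWithin 0 (Set.Ioi 0)) (nhds 1) := by
      have hcont : Continuous fun x : ℝ => Real.exp (-(c * x)) := by continuity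
      have h := hcont.tendsto 0
      simp only [mul_zero, neg_zero, Real.exp_zero] at h
      exact h.mono_left nhdsWithin_le_nhds
    have hcomb := (((hinv.pow 2).mul hz1).const_mul (2 * (-1 : ℝ) ^ k))
    have hval : 2 * (-1 : ℝ) ^ k * ((c⁻¹) ^ 2 * 1) = 2 * (-1 : ℝ) ^ k / c ^ 2 := by
      field_simp
    rw [hval] at hcomb
    refine hcomb.congr' ?_
    filter_upwards [self_mem_nhdsWithin] with x hx
    have hx' : (0:ℝ) < x := hx
    have hzx : Real.exp (-(c * x)) < 1 := Real.exp_lt_one_iff.mpr (by nlinarith)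
    have hne : (1 - Real.exp (-(c * x))) ≠ 0 := by
      have : (0:ℝ) < 1 - Real.exp (-(c * x)) := by linarith
      linarith
    field_simp
  · filter_upwards [self_mem_nhdsWithin] with t ht
    intro k
    set c : ℝ := 2 * (k : ℝ) + 1 with hc_def
    have hc : 0 < c := by positivity
    have ht' : 0 < t := ht
    set z : ℝ := Real.exp (-(c * t)) with hz_def
    have hz0 : 0 < z := Real.exp_pos _
    have hz1 : z < 1 := Real.exp_lt_one_iff.mpr (by nlinarith)
    have h1z : 0 < (1 - z) ^ 2 := pow_pos (by linarith) 2
    have hsq : Real.exp (-(c * t) / 2) ^ 2 = z := by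
      rw [sq, ← Real.exp_add, hz_def]
      congr 1
      ring
    have hA := st18_aux_one_sub_exp (s := c * t) (by positivity)
    have h3 : (c * t) ^ 2 * z ≤ (1 - z) ^ 2 := by
      have h := mul_self_le_mul_self (by positivity : (0:ℝ) ≤ c * t * Real.exp (-(c * t) / 2)) hA
      calc (c * t) ^ 2 * z
          = (c * t * Real.exp (-(c * t) / 2)) * (c * t * Real.exp (-(c * t) / 2)) := by
            rw [← hsq]; ring
        _ ≤ (1 - Real.exp (-(c * t))) * (1 - Real.exp (-(c * t))) := h
        _ = (1 - z) ^ 2 := by rw [← hz_def]; ring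
    have hfin : (t ^ 2 * z) / (1 - z) ^ 2 ≤ 1 / c ^ 2 := by
      rw [div_le_div_iff₀ h1z (by positivity)]
      nlinarith
    have hnorm : ‖t ^ 2 * (2 * (-1 : ℝ) ^ k * (z / (1 - z) ^ 2))‖ =
        2 * ((t ^ 2 * z) / (1 - z) ^ 2) := by
      rw [Real.norm_eq_abs, abs_mul, abs_mul, abs_mul]
      rw [abs_of_nonneg (by positivity : (0:ℝ) ≤ t ^ 2), abs_of_nonneg (by norm_num : (0:ℝ) ≤ 2),
        abs_of_nonneg (by positivity : (0:ℝ) ≤ z / (1 - z) ^ 2)]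
      simp only [abs_pow, abs_neg, abs_one, one_pow]
      ring
    calc ‖t ^ 2 * (2 * (-1 : ℝ) ^ k * (z / (1 - z) ^ 2))‖
        = 2 * ((t ^ 2 * z) / (1 - z) ^ 2) := hnorm
      _ ≤ 2 * (1 / c ^ 2) := by linarith
      _ = 2 / c ^ 2 := by ring

theorem statement18 :
    (∀ t : ℝ, 0 < t →
      Summable fun a : ℕ => ((a : ℝ) + 1) / Real.cosh (((a : ℝ) + 1) * t)) ∧
    Tendsto (fun t : ℝ => t ^ 2 * ∑' a : ℕ, ((a : ℝ) + 1) / Real.cosh (((a : ℝ) + 1) * t))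
      (nhdsWithin 0 (Set.Ioi 0))
      (nhds (2 * ∑' k : ℕ, (-1 : ℝ) ^ k / (2 * (k : ℝ) + 1) ^ 2)) := by
  constructor
  · exact fun t ht => st18_summable ht
  · have hG : (∑' k : ℕ, 2 * (-1 : ℝ) ^ k / (2 * (k : ℝ) + 1) ^ 2) =
        2 * ∑' k : ℕ, (-1 : ℝ) ^ k / (2 * (k : ℝ) + 1) ^ 2 := by
      rw [← tsum_mul_left]
      exact tsum_congr fun k => by ring
    rw [← hG]
    refine st18_limit.congr' ?_
    filter_upwards [self_mem_nhdsWithin] with t ht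
    rw [st18_key ht, ← tsum_mul_left]
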